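/- Let P be the probability measure with density 3/2 on J₁ = [0, 1/3] and 9/4 on J₂ = [2/3, 7/9] ∪ J₃ = [8/9, 1]. For n ≥ 1, the set {(2i-1)/(6n) : 1 ≤ i ≤ n} of midpoints satisfies ∫_{J₁} min_i (x - (2i-1)/(6n))^2 dP = 1/(216 n²), and analogously the n equally spaced midpoints in J₂ (resp. J₃) give distortion 1/(3888 n²) on J₂ (resp. J₃). -/

import Mathlib

open MeasureTheory Set

lemma midpoint_integral (n : ℕ) (hn : 1 ≤ n) (lo w : ℝ) (hw : 0 < w)
    (m : Fin n → ℝ) (hm : ∀ i : Fin n, m i = lo + (2 * (i : ℝ) + 1) * w / 2) :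
    (∫ x in Set.Icc lo (lo + n * w), (⨅ i : Fin n, (x - m i) ^ 2 : ℝ)) =
      n * w ^ 3 / 12 := by
  have hne : Nonempty (Fin n) := ⟨⟨0, hn⟩⟩
  set F : ℝ → ℝ := fun x => ⨅ i : Fin n, (x - m i) ^ 2 with hFdef
  have hbdd : ∀ x : ℝ, BddBelow (Set.range fun i : Fin n => (x - m i) ^ 2) := by
    intro x
    refine ⟨0, ?_⟩
    rintro y ⟨i, rfl⟩
    positivity
  have hFeq : ∀ k : Fin n, ∀ x ∈ Set.Icc (lo + (k : ℝ) * w) (lo + ((k : ℝ) + 1) * w),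
      F x = (x - m k) ^ 2 := by
    intro k x hx
    obtain ⟨hx1, hx2⟩ := hx
    refine le_antisymm (ciInf_le (hbdd x) k) (le_ciInf fun j => ?_)
    rw [hm k, hm j]
    have h1 : (x - (lo + (2 * (k : ℝ) + 1) * w / 2)) ^ 2 ≤ (w / 2) ^ 2 := by
      nlinarith [mul_nonneg (sub_nonneg.2 hx1) (sub_nonneg.2 hx2)]
    rcases lt_trichotomy (j : ℕ) (k : ℕ) with h | h | h
    · have hjk : (j : ℝ) + 1 ≤ (k : ℝ) := by exact_mod_cast h
      have hxm : w / 2 ≤ x - (lo + (2 * (j : ℝ) + 1) * w / 2) := by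
        nlinarith [mul_nonneg hw.le (by linarith : (0:ℝ) ≤ (k : ℝ) - (j : ℝ) - 1)]
      calc (x - (lo + (2 * (k : ℝ) + 1) * w / 2)) ^ 2 ≤ (w / 2) ^ 2 := h1
        _ ≤ (x - (lo + (2 * (j : ℝ) + 1) * w / 2)) ^ 2 :=
          pow_le_pow_left₀ (by positivity) hxm 2
    · have : (j : ℝ) = (k : ℝ) := by exact_mod_cast h
      rw [this]
    · have hjk : (k : ℝ) + 1 ≤ (j : ℝ) := by exact_mod_cast h
      have hxm : w / 2 ≤ (lo + (2 * (j : ℝ) + 1) * w / 2) - x := by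
        nlinarith [mul_nonneg hw.le (by linarith : (0:ℝ) ≤ (j : ℝ) - (k : ℝ) - 1)]
      calc (x - (lo + (2 * (k : ℝ) + 1) * w / 2)) ^ 2 ≤ (w / 2) ^ 2 := h1
        _ = ((w / 2) ^ 2 : ℝ) := rfl
        _ ≤ ((lo + (2 * (j : ℝ) + 1) * w / 2) - x) ^ 2 :=
          pow_le_pow_left₀ (by positivity) hxm 2
        _ = (x - (lo + (2 * (j : ℝ) + 1) * w / 2)) ^ 2 := by ring
  have hle : ∀ k : ℕ, lo + (k : ℝ) * w ≤ lo + ((k : ℝ) + 1) * w := by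
    intro k; nlinarith
  have hint : ∀ k : ℕ, k < n →
      IntervalIntegrable F volume (lo + (k : ℝ) * w) (lo + ((k : ℝ) + 1) * w) := by
    intro k hk
    have hpoly : IntervalIntegrable (fun x => (x - m ⟨k, hk⟩) ^ 2) volume
        (lo + (k : ℝ) * w) (lo + ((k : ℝ) + 1) * w) :=
      (by continuity : Continuous fun x : ℝ => (x - m ⟨k, hk⟩) ^ 2).intervalIntegrable _ _
    refine hpoly.congr ?_
    intro x hx
    rw [Set.uIoc_of_le (hle k)] at hx
    exact (hFeq ⟨k, hk⟩ x (Set.Ioc_subset_Icc_self hx)).symm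
  -- split the integral
  have hsplit : (∫ x in Set.Icc lo (lo + n * w), F x) =
      ∑ k ∈ Finset.range n, ∫ x in (lo + (k : ℝ) * w)..(lo + ((k : ℝ) + 1) * w), F x := by
    have hint' : ∀ k : ℕ, k < n → IntervalIntegrable F volume
        ((fun k : ℕ => lo + (k : ℝ) * w) k) ((fun k : ℕ => lo + (k : ℝ) * w) (k + 1)) := by
      intro k hk
      have := hint k hk
      simpa [Nat.cast_add] using this
    have hsum := intervalIntegral.sum_integral_adjacent_intervals (μ := volume) hint'
    have hlon : lo ≤ lo + (n : ℝ) * w := by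
      have : (0:ℝ) ≤ (n : ℝ) * w := by positivity
      linarith
    rw [MeasureTheory.integral_Icc_eq_integral_Ioc,
      ← intervalIntegral.integral_of_le hlon]
    simp only [Nat.cast_zero, zero_mul, add_zero, Nat.cast_add, Nat.cast_one] at hsum
    exact hsum.symm
  rw [hsplit]
  have hstep : ∀ k ∈ Finset.range n,
      (∫ x in (lo + (k : ℝ) * w)..(lo + ((k : ℝ) + 1) * w), F x) = w ^ 3 / 12 := by
    intro k hk
    rw [Finset.mem_range] at hk
    rw [intervalIntegral.integral_congr (g := fun x => (x - m ⟨k, hk⟩) ^ 2)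
      (by rw [Set.uIcc_of_le (hle k)]; exact fun x hx => hFeq ⟨k, hk⟩ x hx)]
    have hcomp := intervalIntegral.integral_comp_sub_right (a := lo + (k : ℝ) * w)
      (b := lo + ((k : ℝ) + 1) * w) (fun y => y ^ 2) (m ⟨k, hk⟩)
    rw [hcomp, integral_pow]
    rw [hm ⟨k, hk⟩]
    push_cast
    ring
  rw [Finset.sum_congr rfl hstep, Finset.sum_const, Finset.card_range, nsmul_eq_mul]
  ring

/-- The density: `3/2` on `[0,1/3]`, `9/4` on `[2/3,7/9] ∪ [8/9,1]`, `0` elsewhere. -/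
noncomputable def g (x : ℝ) : ℝ :=
  Set.indicator (Set.Icc (0 : ℝ) (1 / 3)) (fun _ => (3 : ℝ) / 2) x +
    Set.indicator (Set.Icc ((2 : ℝ) / 3) (7 / 9) ∪ Set.Icc ((8 : ℝ) / 9) 1)
      (fun _ => (9 : ℝ) / 4) x

/-- The piecewise uniform probability measure with finitely many pieces. -/
noncomputable def Q : Measure ℝ :=
  MeasureTheory.volume.withDensity (fun x => ENNReal.ofReal (g x))

lemma Q_restrict (S : Set ℝ) (hS : MeasurableSet S) (c : ℝ)
    (hgc : ∀ x ∈ S, g x = c) :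
    Q.restrict S = ENNReal.ofReal c • MeasureTheory.volume.restrict S := by
  rw [Q, restrict_withDensity hS]
  rw [withDensity_congr_ae (g := fun _ => ENNReal.ofReal c)
    ((ae_restrict_iff' hS).mpr (ae_of_all _ fun x hx => by rw [hgc x hx]))]
  exact withDensity_const _

lemma setIntegral_Q (S : Set ℝ) (hS : MeasurableSet S) (c : ℝ) (hc : 0 ≤ c)
    (hgc : ∀ x ∈ S, g x = c) (f : ℝ → ℝ) :
    (∫ x in S, f x ∂Q) = c * ∫ x in S, f x := by
  rw [show (∫ x in S, f x ∂Q) = ∫ x, f x ∂(Q.restrict S) from rfl,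
    Q_restrict S hS c hgc, integral_smul_measure, ENNReal.toReal_ofReal hc]
  rfl

theorem stmt_13 (n : ℕ) (hn : 1 ≤ n) :
    (∫ x in Set.Icc (0 : ℝ) (1 / 3),
        (⨅ i : Fin n, (x - (2 * (i : ℝ) + 1) / (6 * n)) ^ 2 : ℝ) ∂Q) = 1 / (216 * n ^ 2) ∧
    (∫ x in Set.Icc ((2 : ℝ) / 3) (7 / 9),
        (⨅ i : Fin n, (x - (2 / 3 + (2 * (i : ℝ) + 1) / (18 * n))) ^ 2 : ℝ) ∂Q) =
      1 / (3888 * n ^ 2) ∧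
    (∫ x in Set.Icc ((8 : ℝ) / 9) 1,
        (⨅ i : Fin n, (x - (8 / 9 + (2 * (i : ℝ) + 1) / (18 * n))) ^ 2 : ℝ) ∂Q) =
      1 / (3888 * n ^ 2) := by
  have hn0 : (n : ℝ) ≠ 0 := Nat.cast_ne_zero.2 (by omega)
  have hnpos : (0 : ℝ) < n := by positivity
  refine ⟨?_, ?_, ?_⟩
  · have hg1 : ∀ x ∈ Set.Icc (0 : ℝ) (1 / 3), g x = 3 / 2 := by
      intro x hx
      have hx2 : x ≤ 1 / 3 := hx.2
      rw [g, Set.indicator_of_mem hx, Set.indicator_of_notMem (by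
        rintro (h | h) <;> (have := h.1; linarith))]
      ring
    rw [setIntegral_Q _ measurableSet_Icc (3 / 2) (by norm_num) hg1]
    have key := midpoint_integral n hn 0 (1 / (3 * n)) (by positivity)
      (fun i => (2 * (i : ℝ) + 1) / (6 * n))
      (fun i => by field_simp; ring_nf; try tauto)
    rw [show (0 : ℝ) + n * (1 / (3 * n)) = 1 / 3 by field_simp; ring] at key
    rw [key]
    field_simp
    ring
  · have hg2 : ∀ x ∈ Set.Icc ((2 : ℝ) / 3) (7 / 9), g x = 9 / 4 := by
      intro x hx
      rw [g, Set.indicator_of_notMem (by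
          intro h; have := h.2; have := hx.1; linarith),
        Set.indicator_of_mem (Set.mem_union_left _ hx)]
      ring
    rw [setIntegral_Q _ measurableSet_Icc (9 / 4) (by norm_num) hg2]
    have key := midpoint_integral n hn (2 / 3) (1 / (9 * n)) (by positivity)
      (fun i => 2 / 3 + (2 * (i : ℝ) + 1) / (18 * n))
      (fun i => by field_simp; ring_nf; try tauto)
    rw [show (2 : ℝ) / 3 + n * (1 / (9 * n)) = 7 / 9 by field_simp; ring] at key
    rw [key]
    field_simp
    ring
  · have hg3 : ∀ x ∈ Set.Icc ((8 : ℝ) / 9) 1, g x = 9 / 4 := by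
      intro x hx
      rw [g, Set.indicator_of_notMem (by
          intro h; have := h.2; have := hx.1; linarith),
        Set.indicator_of_mem (Set.mem_union_right _ hx)]
      ring
    rw [setIntegral_Q _ measurableSet_Icc (9 / 4) (by norm_num) hg3]
    have key := midpoint_integral n hn (8 / 9) (1 / (9 * n)) (by positivity)
      (fun i => 8 / 9 + (2 * (i : ℝ) + 1) / (18 * n))
      (fun i => by field_simp; ring_nf; try tauto)
    rw [show (8 : ℝ) / 9 + n * (1 / (9 * n)) = 1 by field_simp; ring] at key
    rw [key]
    field_simp
    ring
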